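/- Let r ≥ 1 and h ≥ 2 be integers, k = (2h−2)^r + 1, and ε > 0. Let ≺_1, ..., ≺_r be partial orders on an n-element set P and let G be the graph on P in which distinct x, y are adjacent iff x and y are comparable in at least one ≺_i (the r-comparability graph). If G contains at least ε·n^k copies of K_k, then for some i ∈ {1,...,r} the comparability graph of ≺_i contains K_h[⌈ε·n/r⌉]. -/

import Mathlib

/-- The number of `r`-element vertex subsets of `G` inducing a complete subgraph
(copies of `K_r`). -/
noncomputable def cliqueCount {V : Type*} [Fintype V] (G : SimpleGraph V) (r : ℕ) : ℕ :=
  Set.ncard {s : Finset V | s.card = r ∧ G.IsClique (s : Set V)}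

/-- `G` contains `K_r[t]`: `r` pairwise disjoint vertex sets of size `t` with all
pairs of vertices from distinct sets adjacent. -/
def ContainsBlowup {V : Type*} (G : SimpleGraph V) (r t : ℕ) : Prop :=
  ∃ A : Fin r → Finset V,
    (∀ i, (A i).card = t) ∧
    (∀ i j, i ≠ j → Disjoint (A i) (A j)) ∧
    (∀ i j, i ≠ j → ∀ x ∈ A i, ∀ y ∈ A j, G.Adj x y)

/-- The ordered graph `G` on `Fin n` contains an induced monotone path with `m`
vertices: `v 0 < v 1 < ⋯ < v (m-1)` with adjacency exactly between consecutive
vertices. -/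
def HasIndMonPath {n : ℕ} (G : SimpleGraph (Fin n)) (m : ℕ) : Prop :=
  ∃ v : Fin m → Fin n, StrictMono v ∧
    ∀ i j : Fin m, G.Adj (v i) (v j) ↔ ((i : ℕ) + 1 = (j : ℕ) ∨ (j : ℕ) + 1 = (i : ℕ))

/-- The comparability graph of a relation `R` (e.g. a strict partial order):
distinct elements are adjacent iff they are related in one direction. -/
def compGraph {α : Type*} (R : α → α → Prop) : SimpleGraph α where
  Adj x y := x ≠ y ∧ (R x y ∨ R y x)
  symm := ⟨fun _ _ h => ⟨h.1.symm, h.2.symm⟩⟩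
  loopless := ⟨fun _ h => h.1 rfl⟩

/-- The `r`-comparability graph of relations `R 0, …, R (r-1)`: distinct
elements are adjacent iff they are comparable in at least one of them. -/
def multiCompGraph {α : Type*} {r : ℕ} (R : Fin r → α → α → Prop) : SimpleGraph α where
  Adj x y := x ≠ y ∧ ∃ i, R i x y ∨ R i y x
  symm := ⟨fun _ _ h => ⟨h.1.symm, h.2.imp (fun _ hi => hi.symm)⟩⟩
  loopless := ⟨fun _ h => h.1 rfl⟩

def IsChainFun {α : Type*} (Q : α → α → Prop) {d : ℕ} (c : Fin d → α) : Prop :=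
  ∀ p q : Fin d, p < q → Q (c p) (c q)

open Finset

lemma IsChainFun.injective {α : Type*} {Q : α → α → Prop} (hirr : ∀ a, ¬ Q a a)
    {d : ℕ} {c : Fin d → α} (hc : IsChainFun Q c) : Function.Injective c := by
  intro p q hpq
  by_contra hne
  rcases lt_or_gt_of_ne hne with hlt | hlt
  · exact hirr (c p) (hpq ▸ hc p q hlt)
  · exact hirr (c q) (hpq ▸ hc q p hlt)

lemma IsChainFun.snoc {α : Type*} {Q : α → α → Prop}
    (htr : ∀ a b c, Q a b → Q b c → Q a c)
    {d : ℕ} {c : Fin (d+1) → α} (hc : IsChainFun Q c) {y : α}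
    (hy : Q (c (Fin.last d)) y) : IsChainFun Q (Fin.snoc c y : Fin (d+2) → α) := by
  intro p q hpq
  rcases Fin.eq_castSucc_or_eq_last q with ⟨q', rfl⟩ | rfl
  · have hp : p ≠ Fin.last (d+1) := by
      intro hp; subst hp
      have := q'.isLt
      simp only [Fin.lt_def, Fin.val_last, Fin.coe_castSucc] at hpq
      omega
    obtain ⟨p', rfl⟩ := Fin.exists_castSucc_eq.mpr hp
    rw [Fin.snoc_castSucc, Fin.snoc_castSucc]
    exact hc p' q' (by
        simp only [Fin.lt_def, Fin.coe_castSucc] at hpq ⊢; exact hpq)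
  · have hp : p ≠ Fin.last (d+1) := Fin.ne_last_of_lt hpq
    obtain ⟨p', rfl⟩ := Fin.exists_castSucc_eq.mpr hp
    rw [Fin.snoc_castSucc, Fin.snoc_last]
    rcases eq_or_ne p' (Fin.last d) with rfl | hp'
    · exact hy
    · exact htr _ _ _ (hc p' (Fin.last d) (Fin.lt_last_iff_ne_last.mpr hp')) hy

open Finset in
lemma exists_long_chain {α : Type*} {r m : ℕ} (hm : 1 ≤ m) (R : Fin r → α → α → Prop)
    (hR : ∀ i, IsStrictOrder α (R i)) (S : Finset α)
    (hcomp : ∀ x ∈ S, ∀ y ∈ S, x ≠ y → ∃ i, R i x y ∨ R i y x)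
    (hcard : m ^ r < S.card) :
    ∃ i, ∃ c : Fin (m + 1) → α, (∀ p, c p ∈ S) ∧ IsChainFun (R i) c := by
  classical
  have hirr : ∀ i (a : α), ¬ R i a a := fun i a => (hR i).toIrrefl.irrefl a
  have htr : ∀ i (a b c : α), R i a b → R i b c → R i a c :=
    fun i a b c => (hR i).toIsTrans.trans a b c
  -- the property: there is a chain of d+1 elements of S (w.r.t. R i) ending at x
  set P : Fin r → α → ℕ → Prop := fun i x d =>
    ∃ c : Fin (d + 1) → α, (∀ p, c p ∈ S) ∧ IsChainFun (R i) c ∧ c (Fin.last d) = x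
    with hP
  -- a chain of d+1 elements of S has d+1 ≤ S.card
  have hbnd : ∀ i x d, P i x d → d + 1 ≤ S.card := by
    rintro i x d ⟨c, hcS, hc, -⟩
    calc d + 1 = (univ : Finset (Fin (d+1))).card := by simp
    _ ≤ S.card := Finset.card_le_card_of_injOn c (fun p _ => hcS p)
        (fun p _ q _ hpq => (hc.injective (hirr i)) hpq)
  by_cases hlong : ∃ i x, x ∈ S ∧ P i x m
  · obtain ⟨i, x, -, c, hcS, hc, -⟩ := hlong
    exact ⟨i, c, hcS, hc⟩
  push_neg at hlong
  -- heights
  set ht : Fin r → α → ℕ := fun i x => Nat.findGreatest (P i x) S.card with hht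
  have hP0 : ∀ i, ∀ x ∈ S, P i x 0 := by
    intro i x hx
    exact ⟨fun _ => x, fun _ => hx, fun p q hpq => absurd hpq (by simp only [Fin.lt_def] at *; omega), rfl⟩
  have hspec : ∀ i, ∀ x ∈ S, P i x (ht i x) := by
    intro i x hx
    exact Nat.findGreatest_spec (Nat.zero_le _) (hP0 i x hx)
  have hmono : ∀ i, ∀ x ∈ S, ∀ y ∈ S, R i x y → ht i x < ht i y := by
    intro i x hx y hy hxy
    obtain ⟨c, hcS, hc, hcl⟩ := hspec i x hx
    have hPy : P i y (ht i x + 1) :=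
      ⟨Fin.snoc c y, by
        intro p
        rcases Fin.eq_castSucc_or_eq_last p with ⟨p', rfl⟩ | rfl
        · rw [Fin.snoc_castSucc]; exact hcS p'
        · rw [Fin.snoc_last]; exact hy,
       hc.snoc (htr i) (by rw [hcl]; exact hxy), by simp⟩
    have hb : ht i x + 1 ≤ S.card := by
      have := hbnd i y _ hPy; omega
    exact Nat.le_findGreatest hb hPy
  -- heights are < m
  have hlt : ∀ i, ∀ x ∈ S, ht i x < m := by
    intro i x hx
    rcases Nat.lt_or_ge (ht i x) m with h | h
    · exact h
    · exfalso
      obtain ⟨c, hcS, hc, -⟩ := hspec i x hx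
      -- restrict to first m+1 entries
      refine hlong i (c (Fin.castLE (by omega) (Fin.last m))) (hcS _) ?_
      refine ⟨fun p => c (Fin.castLE (by omega) p), fun p => hcS _, ?_, rfl⟩
      intro p q hpq
      exact hc _ _ (by simp only [Fin.lt_def, Fin.coe_castLE] at hpq ⊢; exact hpq)
  -- pigeonhole on height vectors
  exfalso
  have hm0 : 0 < m := hm
  set φ : α → (Fin r → Fin m) := fun x i => ⟨ht i x % m, Nat.mod_lt _ hm0⟩ with hφ
  have hinj : Set.InjOn φ S := by
    intro x hx y hy hxy
    by_contra hne
    obtain ⟨i, hi⟩ := hcomp x hx y hy hne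
    have h1 : ht i x ≠ ht i y := by
      rcases hi with hi | hi
      · exact Nat.ne_of_lt (hmono i x hx y hy hi)
      · exact Nat.ne_of_gt (hmono i y hy x hx hi)
    have h2 := congrFun hxy i
    simp only [hφ, Fin.mk.injEq] at h2
    rw [Nat.mod_eq_of_lt (hlt i x hx), Nat.mod_eq_of_lt (hlt i y hy)] at h2
    exact h1 h2
  have : S.card ≤ m ^ r := by
    calc S.card ≤ (univ : Finset (Fin r → Fin m)).card :=
      Finset.card_le_card_of_injOn φ (fun a _ => mem_univ _) (fun a ha b hb => hinj ha hb)
    _ = m ^ r := by simp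
  omega



theorem stmt_10 (r h : ℕ) (hr : 1 ≤ r) (hh : 2 ≤ h) (ε : ℝ) (hε : 0 < ε)
    (α : Type) [Fintype α] (R : Fin r → α → α → Prop)
    (hR : ∀ i, IsStrictOrder α (R i))
    (hclique : ε * (Fintype.card α : ℝ) ^ ((2 * h - 2) ^ r + 1) ≤
      (cliqueCount (multiCompGraph R) ((2 * h - 2) ^ r + 1) : ℝ)) :
    ∃ i : Fin r, ContainsBlowup (compGraph (R i)) h
      ⌈ε * (Fintype.card α : ℝ) / (r : ℝ)⌉₊ := by
  classical
  have hirr : ∀ i (a : α), ¬ R i a a := fun i a => (hR i).toIrrefl.irrefl a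
  have htr : ∀ i (a b c : α), R i a b → R i b c → R i a c :=
    fun i a b c => (hR i).toIsTrans.trans a b c
  set n := Fintype.card α with hn
  set t := ⌈ε * (n : ℝ) / (r : ℝ)⌉₊ with htdef
  -- trivial case t = 0
  by_cases ht0 : t = 0
  · refine ⟨⟨0, hr⟩, fun _ => ∅, by simp [ht0], by simp, by simp⟩
  have htpos : 0 < t := Nat.pos_of_ne_zero ht0
  have hrpos : (0 : ℝ) < r := by exact_mod_cast hr
  have hnpos : 0 < n := by
    by_contra hn0
    have : n = 0 := by omega
    rw [htdef, this] at ht0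
    simp at ht0
  have hα : Nonempty α := Fintype.card_pos_iff.mp hnpos
  obtain ⟨K', hK'⟩ : ∃ K', (2 * h - 2) ^ r = K' := ⟨_, rfl⟩
  have hK'ge : 2 * h - 2 ≤ K' := hK' ▸ Nat.le_self_pow (by omega) _
  set k := (2 * h - 2) ^ r + 1 with hkdef
  have hkK' : k = K' + 1 := by rw [hkdef, hK']
  set M := 2 * h - 2 + 1 with hMdef
  have hMk : M ≤ k := by omega
  -- cliques as a finset
  set CL : Finset (Finset α) :=
    univ.filter (fun s => s.card = k ∧ (multiCompGraph R).IsClique (s : Set α)) with hCLdef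
  have hCL : cliqueCount (multiCompGraph R) k = CL.card := by
    rw [cliqueCount, ← Set.ncard_coe_finset]
    congr 1
    ext s
    simp [hCLdef]
  -- chains
  set Ch : Fin r → Finset (Fin M → α) :=
    fun i => univ.filter (fun c => IsChainFun (R i) c) with hChdef
  -- every clique contains a long chain
  have hchoice : ∀ s ∈ CL, ∃ p : Σ _ : Fin r, (Fin M → α),
      IsChainFun (R p.1) p.2 ∧ ∀ q, p.2 q ∈ s := by
    intro s hs
    rw [hCLdef, mem_filter] at hs
    obtain ⟨-, hcard, hcl⟩ := hs
    obtain ⟨i, c, hcS, hc⟩ := exists_long_chain (m := 2 * h - 2) (by omega) R hR s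
      (fun x hx y hy hxy => ((hcl hx hy hxy : x ≠ y ∧ ∃ i, R i x y ∨ R i y x).2 : ∃ i, R i x y ∨ R i y x))
      (by rw [hcard]; omega)
    exact ⟨⟨i, c⟩, hc, hcS⟩
  -- the injection from cliques
  set F : Finset α → (Σ _ : Fin r, (Fin M → α) × Finset α) := fun s =>
    if hs : s ∈ CL then
      ⟨(Classical.choose (hchoice s hs)).1, (Classical.choose (hchoice s hs)).2,
        s \ Finset.image (Classical.choose (hchoice s hs)).2 univ⟩
    else ⟨⟨0, hr⟩, fun _ => Classical.arbitrary α, ∅⟩ with hFdef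
  set T : Finset (Σ _ : Fin r, (Fin M → α) × Finset α) :=
    univ.sigma (fun i => (Ch i) ×ˢ (univ.powersetCard (k - M))) with hTdef
  have hFmem : ∀ s ∈ CL, F s ∈ T ∧ Finset.image (F s).2.1 univ ∪ (F s).2.2 = s := by
    intro s hs
    have hsub : Finset.image (Classical.choose (hchoice s hs)).2 univ ⊆ s := by
      intro a ha
      obtain ⟨q, -, rfl⟩ := Finset.mem_image.mp ha
      exact (Classical.choose_spec (hchoice s hs)).2 q
    have hscard : s.card = k := (Finset.mem_filter.mp hs).2.1
    have himcard : (Finset.image (Classical.choose (hchoice s hs)).2 univ).card = M := by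
      rw [Finset.card_image_of_injective _
        (IsChainFun.injective (hirr _) (Classical.choose_spec (hchoice s hs)).1)]
      simp
    constructor
    · rw [hFdef]
      simp only [dif_pos hs]
      rw [hTdef, Finset.mem_sigma, Finset.mem_product]
      refine ⟨Finset.mem_univ _, ?_, ?_⟩
      · rw [hChdef, Finset.mem_filter]
        exact ⟨Finset.mem_univ _, (Classical.choose_spec (hchoice s hs)).1⟩
      · rw [Finset.mem_powersetCard_univ, Finset.card_sdiff_of_subset hsub, himcard, hscard]
    · rw [hFdef]
      simp only [dif_pos hs]
      exact Finset.union_sdiff_of_subset hsub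
  have S1 : CL.card ≤ T.card := by
    refine Finset.card_le_card_of_injOn F (fun s hs => (hFmem s hs).1) ?_
    intro s hs s' hs' heq
    rw [← (hFmem s hs).2, ← (hFmem s' hs').2, heq]
  have hTcard : T.card = ∑ i, (Ch i).card * n.choose (k - M) := by
    rw [hTdef, Finset.card_sigma]
    congr 1
    ext i
    rw [Finset.card_product, Finset.card_powersetCard, Finset.card_univ]
  -- pick the order with the most chains
  obtain ⟨i₀, -, hi₀⟩ := Finset.exists_max_image (univ : Finset (Fin r))
    (fun i => (Ch i).card) ⟨⟨0, hr⟩, Finset.mem_univ _⟩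
  have S2 : CL.card ≤ r * ((Ch i₀).card * n.choose (k - M)) := by
    calc CL.card ≤ T.card := S1
    _ = ∑ i, (Ch i).card * n.choose (k - M) := hTcard
    _ ≤ ∑ _i : Fin r, (Ch i₀).card * n.choose (k - M) := by
        refine Finset.sum_le_sum (fun i _ => ?_)
        exact Nat.mul_le_mul_right _ (hi₀ i (Finset.mem_univ _))
    _ = r * ((Ch i₀).card * n.choose (k - M)) := by
        rw [Finset.sum_const, Finset.card_univ, Fintype.card_fin, smul_eq_mul]
  -- projection to odd positions
  set π : (Fin M → α) → (Fin (h - 1) → α) :=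
    fun c j => c ⟨2 * j.val + 1, by have := j.isLt; omega⟩ with hπdef
  obtain ⟨e₀, -, he₀max⟩ := Finset.exists_max_image (univ : Finset (Fin (h - 1) → α))
    (fun e => ((Ch i₀).filter (fun c => π c = e)).card) univ_nonempty
  set fib := (Ch i₀).filter (fun c => π c = e₀) with hfibdef
  have S3 : (Ch i₀).card ≤ n ^ (h - 1) * fib.card := by
    calc (Ch i₀).card
        = ∑ e : Fin (h - 1) → α, ((Ch i₀).filter (fun c => π c = e)).card :=
          Finset.card_eq_sum_card_fiberwise (fun c _ => Finset.mem_univ (π c))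
    _ ≤ ∑ _e : Fin (h - 1) → α, fib.card :=
          Finset.sum_le_sum (fun e _ => he₀max e (Finset.mem_univ _))
    _ = n ^ (h - 1) * fib.card := by
          rw [Finset.sum_const, Finset.card_univ, smul_eq_mul, Fintype.card_fun,
            Fintype.card_fin]
  -- the interval sets
  set A : Fin h → Finset α := fun j =>
    univ.filter (fun z =>
      (∀ _ : 0 < j.val, R i₀ (e₀ ⟨j.val - 1, by have := j.isLt; omega⟩) z) ∧
      (∀ hj : j.val < h - 1, R i₀ z (e₀ ⟨j.val, hj⟩))) with hAdef
  -- injection from the fiber into the product of the A's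
  have S4 : fib.card ≤ ∏ j, (A j).card := by
    rw [← Fintype.card_piFinset]
    refine Finset.card_le_card_of_injOn
      (fun c j => c ⟨2 * j.val, by have := j.isLt; omega⟩) ?_ ?_
    · intro c hc
      simp only [Finset.mem_coe, hfibdef, Finset.mem_filter] at hc
      obtain ⟨hcCh, hcπ⟩ := hc
      rw [hChdef, Finset.mem_filter] at hcCh
      have hchain := hcCh.2
      rw [Finset.mem_coe, Fintype.mem_piFinset]
      intro j
      rw [hAdef, Finset.mem_filter]
      refine ⟨Finset.mem_univ _, ?_, ?_⟩
      · intro hj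
        have : e₀ ⟨j.val - 1, by have := j.isLt; omega⟩
            = c ⟨2 * (j.val - 1) + 1, by have := j.isLt; omega⟩ := by
          rw [← hcπ]
        rw [this]
        exact hchain _ _ (by simp only [Fin.mk_lt_mk]; omega)
      · intro hj
        have : e₀ ⟨j.val, hj⟩ = c ⟨2 * j.val + 1, by omega⟩ := by
          rw [← hcπ]
        rw [this]
        exact hchain _ _ (by simp only [Fin.mk_lt_mk]; omega)
    · intro c hc c' hc' heq
      have hcπ : π c = e₀ := (Finset.mem_filter.mp hc).2
      have hcπ' : π c' = e₀ := (Finset.mem_filter.mp hc').2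
      funext p
      rcases Nat.even_or_odd p.val with ⟨q, hq⟩ | ⟨q, hq⟩
      · have hqlt : q < h := by have := p.isLt; omega
        have hp : p = ⟨2 * q, by omega⟩ := by apply Fin.ext; simp; omega
        rw [hp]
        exact congrFun heq ⟨q, hqlt⟩
      · have hqlt : q < h - 1 := by have := p.isLt; omega
        have hp : p = ⟨2 * q + 1, by omega⟩ := by apply Fin.ext; simp; omega
        have h1 : c p = e₀ ⟨q, hqlt⟩ := by rw [← hcπ, hp]
        have h2 : c' p = e₀ ⟨q, hqlt⟩ := by rw [← hcπ', hp]
        rw [h1, h2]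
  have S5 : ∀ j, (A j).card ≤ n := fun j =>
    le_of_le_of_eq (Finset.card_le_card (Finset.filter_subset _ _)) Finset.card_univ
  have hchoosele : n.choose (k - M) ≤ n ^ (k - M) := Nat.choose_le_pow _ _
  have hexp : (h - 1) + ((h - 1) + (k - M)) = k - 1 := by omega
  have master : ∀ j : Fin h, CL.card ≤ r * ((A j).card * n ^ (k - 1)) := by
    intro j
    have hprod : ∏ l, (A l).card ≤ (A j).card * n ^ (h - 1) := by
      rw [← Finset.mul_prod_erase univ _ (Finset.mem_univ j)]
      refine Nat.mul_le_mul_left _ ?_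
      calc ∏ l ∈ univ.erase j, (A l).card ≤ ∏ _l ∈ univ.erase j, n :=
            Finset.prod_le_prod' (fun l _ => S5 l)
      _ = n ^ (h - 1) := by
            rw [Finset.prod_const, Finset.card_erase_of_mem (Finset.mem_univ j),
              Finset.card_univ, Fintype.card_fin]
    calc CL.card ≤ r * ((Ch i₀).card * n.choose (k - M)) := S2
    _ ≤ r * ((n ^ (h - 1) * fib.card) * n ^ (k - M)) :=
        Nat.mul_le_mul_left _ (Nat.mul_le_mul S3 hchoosele)
    _ ≤ r * ((n ^ (h - 1) * ((A j).card * n ^ (h - 1))) * n ^ (k - M)) :=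
        Nat.mul_le_mul_left _ (Nat.mul_le_mul_right _
          (Nat.mul_le_mul_left _ (le_trans S4 hprod)))
    _ = r * ((A j).card * (n ^ (h - 1) * (n ^ (h - 1) * n ^ (k - M)))) := by ring
    _ = r * ((A j).card * n ^ (k - 1)) := by rw [← pow_add, ← pow_add, hexp]
  have hCLreal : ε * (n : ℝ) ^ k ≤ (CL.card : ℝ) := by
    rw [hCL] at hclique; exact hclique
  have hnr : (0 : ℝ) < (n : ℝ) := by exact_mod_cast hnpos
  have hpowpos : (0 : ℝ) < (n : ℝ) ^ (k - 1) := pow_pos hnr _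
  -- fiber is nonempty
  have hfibpos : fib.Nonempty := by
    rw [← Finset.card_pos]
    by_contra h0
    have hf0 : fib.card = 0 := by omega
    have hz : CL.card = 0 := by
      have h1 : CL.card ≤ r * ((n ^ (h - 1) * fib.card) * n ^ (k - M)) :=
        le_trans S2 (Nat.mul_le_mul_left _ (Nat.mul_le_mul S3 hchoosele))
      rw [hf0] at h1; simpa using h1
    have hpos : (0 : ℝ) < ε * (n : ℝ) ^ k := by positivity
    rw [hz] at hCLreal
    simp at hCLreal
    linarith
  -- e₀ is a chain
  have he₀chain : ∀ a b : Fin (h - 1), a.val < b.val → R i₀ (e₀ a) (e₀ b) := by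
    intro a b hab
    obtain ⟨c₀, hc₀⟩ := hfibpos
    have hcπ : π c₀ = e₀ := (Finset.mem_filter.mp hc₀).2
    have hch : IsChainFun (R i₀) c₀ :=
      (Finset.mem_filter.mp (Finset.mem_filter.mp hc₀).1).2
    rw [← hcπ]
    exact hch ⟨2 * a.val + 1, by have := a.isLt; omega⟩
      ⟨2 * b.val + 1, by have := b.isLt; omega⟩ (by simp only [Fin.mk_lt_mk]; omega)
  have hkey : ∀ a b : Fin (h - 1), a.val ≤ b.val → ∀ z, R i₀ (e₀ b) z → R i₀ (e₀ a) z := by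
    intro a b hab z hz
    rcases eq_or_lt_of_le hab with heq | hlt
    · rw [show a = b from Fin.ext heq]; exact hz
    · exact htr _ _ _ _ (he₀chain a b hlt) hz
  -- crossing relation
  have hcross : ∀ j j' : Fin h, j.val < j'.val → ∀ x ∈ A j, ∀ y ∈ A j', R i₀ x y := by
    intro j j' hjj x hx y hy
    have hb1 : j.val < h - 1 := by have := j'.isLt; omega
    have hx2 := (Finset.mem_filter.mp hx).2.2 hb1
    have hy1 := (Finset.mem_filter.mp hy).2.1 (show 0 < j'.val by omega)
    exact htr _ _ _ _ hx2
      (hkey ⟨j.val, hb1⟩ ⟨j'.val - 1, by omega⟩ (by simp only []; omega) y hy1)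
  -- size of the A's
  have hAcard : ∀ j, t ≤ (A j).card := by
    intro j
    have h1 : ε * (n : ℝ) ^ k ≤ (r : ℝ) * ((A j).card * (n : ℝ) ^ (k - 1)) :=
      le_trans hCLreal (by exact_mod_cast master j)
    have hksplit : (n : ℝ) ^ k = (n : ℝ) * (n : ℝ) ^ (k - 1) := by
      rw [← pow_succ']
      congr 1
    rw [hksplit] at h1
    have h3 : (ε * n) * (n : ℝ) ^ (k - 1) ≤ ((r : ℝ) * (A j).card) * (n : ℝ) ^ (k - 1) := by
      ring_nf at h1 ⊢
      linarith
    have h2 : ε * (n : ℝ) ≤ (r : ℝ) * (A j).card := le_of_mul_le_mul_right h3 hpowpos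
    rw [htdef, Nat.ceil_le, div_le_iff₀ hrpos]
    linarith
  -- construct the blowup
  choose B hB1 hB2 using fun j => Finset.exists_subset_card_eq (hAcard j)
  refine ⟨i₀, B, hB2, ?_, ?_⟩
  · intro a b hab
    rw [Finset.disjoint_left]
    intro z hza hzb
    rcases lt_or_gt_of_ne (fun hv => hab (Fin.ext hv) : a.val ≠ b.val) with hlt | hlt
    · exact hirr i₀ z (hcross a b hlt z (hB1 a hza) z (hB1 b hzb))
    · exact hirr i₀ z (hcross b a hlt z (hB1 b hzb) z (hB1 a hza))
  · intro a b hab x hxa y hyb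
    rcases lt_or_gt_of_ne (fun hv => hab (Fin.ext hv) : a.val ≠ b.val) with hlt | hlt
    · have hxy := hcross a b hlt x (hB1 a hxa) y (hB1 b hyb)
      exact ⟨fun he => hirr i₀ x (he ▸ hxy), Or.inl hxy⟩
    · have hxy := hcross b a hlt y (hB1 b hyb) x (hB1 a hxa)
      exact ⟨fun he => hirr i₀ y (he ▸ hxy), Or.inr hxy⟩
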